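/- If A is a commutative k-algebra and R ∈ A⊗A⊗A is a canonical R-matrix, then R = 1⊗1⊗1 and the unit map k → A is a ring epimorphism. -/

import Mathlib

open TensorProduct

/-- If `A` is a commutative `k`-algebra and `R = ∑ᵢ xᵢ ⊗ yᵢ ⊗ zᵢ` is a
canonical R-matrix (invertible in `A ⊗ A ⊗ A`, satisfying the three centralizing
conditions and the two hexagon identities), then `R = 1 ⊗ 1 ⊗ 1` and the unit map
`k → A` is a ring epimorphism (equivalently `a ⊗ 1 = 1 ⊗ a` in `A ⊗ₖ A` for all `a`). -/
theorem commutative_canonical_R_matrix_is_trivial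
    (k A : Type*) [CommRing k] [CommRing A] [Algebra k A]
    (ι : Type*) (s : Finset ι) (x y z : ι → A)
    (hunit : IsUnit (∑ i ∈ s, x i ⊗ₜ[k] y i ⊗ₜ[k] z i))
    (hcen3 : ∀ a : A,
      ∑ i ∈ s, x i ⊗ₜ[k] y i ⊗ₜ[k] (a * z i)
        = ∑ i ∈ s, (x i * a) ⊗ₜ[k] y i ⊗ₜ[k] z i)
    (hcen1 : ∀ a : A,
      ∑ i ∈ s, (a * x i) ⊗ₜ[k] y i ⊗ₜ[k] z i
        = ∑ i ∈ s, x i ⊗ₜ[k] (y i * a) ⊗ₜ[k] z i)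
    (hcen2 : ∀ a : A,
      ∑ i ∈ s, x i ⊗ₜ[k] (a * y i) ⊗ₜ[k] z i
        = ∑ i ∈ s, x i ⊗ₜ[k] y i ⊗ₜ[k] (z i * a))
    (hhex1 : ∑ i ∈ s, x i ⊗ₜ[k] y i ⊗ₜ[k] (1 : A) ⊗ₜ[k] z i
      = ∑ i ∈ s, ∑ j ∈ s,
          (x j * x i) ⊗ₜ[k] y j ⊗ₜ[k] (z j * y i) ⊗ₜ[k] z i)
    (hhex2 : ∑ i ∈ s, x i ⊗ₜ[k] (1 : A) ⊗ₜ[k] y i ⊗ₜ[k] z i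
      = ∑ i ∈ s, ∑ j ∈ s,
          x i ⊗ₜ[k] (y i * x j) ⊗ₜ[k] y j ⊗ₜ[k] (z i * z j)) :
    (∑ i ∈ s, x i ⊗ₜ[k] y i ⊗ₜ[k] z i
        = (1 : A) ⊗ₜ[k] (1 : A) ⊗ₜ[k] (1 : A)) ∧
    (∀ a : A, a ⊗ₜ[k] (1 : A) = (1 : A) ⊗ₜ[k] a) := by
  set R : (A ⊗[k] A) ⊗[k] A := ∑ i ∈ s, x i ⊗ₜ[k] y i ⊗ₜ[k] z i with hRdef
  -- Step 1: a⊗1⊗1 = 1⊗a⊗1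
  have h1 : ∀ a : A, ((a ⊗ₜ[k] (1:A)) ⊗ₜ[k] (1:A)) = ((1:A) ⊗ₜ[k] a) ⊗ₜ[k] (1:A) := by
    intro a
    refine hunit.mul_right_cancel ?_
    rw [hRdef, Finset.mul_sum, Finset.mul_sum]
    simp only [Algebra.TensorProduct.tmul_mul_tmul, one_mul, mul_one]
    rw [hcen1 a]
    simp [mul_comm]
  -- Step 2: 1⊗a⊗1 = 1⊗1⊗a
  have h2 : ∀ a : A, (((1:A) ⊗ₜ[k] a) ⊗ₜ[k] (1:A)) = ((1:A) ⊗ₜ[k] (1:A)) ⊗ₜ[k] a := by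
    intro a
    refine hunit.mul_right_cancel ?_
    rw [hRdef, Finset.mul_sum, Finset.mul_sum]
    simp only [Algebra.TensorProduct.tmul_mul_tmul, one_mul, mul_one]
    rw [hcen2 a]
    simp [mul_comm]
  have h3 : ∀ a : A, (((1:A) ⊗ₜ[k] (1:A)) ⊗ₜ[k] a) = (a ⊗ₜ[k] (1:A)) ⊗ₜ[k] (1:A) :=
    fun a => ((h1 a).trans (h2 a)).symm
  -- Second conclusion
  have hepi : ∀ a : A, a ⊗ₜ[k] (1 : A) = (1 : A) ⊗ₜ[k] a := by
    intro a
    have := congrArg (Algebra.TensorProduct.map (Algebra.TensorProduct.lmul' k) (AlgHom.id k A))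
      ((h1 a).trans (h2 a))
    simpa using this
  -- Collapse of pure tensors in A ⊗ A ⊗ A
  have hcol : ∀ a b c : A, ((a ⊗ₜ[k] b) ⊗ₜ[k] c : (A ⊗[k] A) ⊗[k] A)
      = ((a * b * c) ⊗ₜ[k] (1:A)) ⊗ₜ[k] (1:A) := by
    intro a b c
    have : ((a ⊗ₜ[k] b) ⊗ₜ[k] c : (A ⊗[k] A) ⊗[k] A)
        = ((a ⊗ₜ[k] (1:A)) ⊗ₜ[k] (1:A)) * (((1:A) ⊗ₜ[k] b) ⊗ₜ[k] (1:A))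
          * (((1:A) ⊗ₜ[k] (1:A)) ⊗ₜ[k] c) := by
      simp only [Algebra.TensorProduct.tmul_mul_tmul, one_mul, mul_one]
    rw [this, ← h1 b, h3 c]
    simp only [Algebra.TensorProduct.tmul_mul_tmul, one_mul, mul_one]
  set m : A := ∑ i ∈ s, x i * y i * z i with hmdef
  have hR : R = (m ⊗ₜ[k] (1:A)) ⊗ₜ[k] (1:A) := by
    rw [hRdef, hmdef, TensorProduct.sum_tmul, TensorProduct.sum_tmul]
    exact Finset.sum_congr rfl fun i _ => hcol _ _ _
  -- total multiplication maps
  set μ : A ⊗[k] A →ₐ[k] A := Algebra.TensorProduct.lmul' k with hμ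
  set μ3 : (A ⊗[k] A) ⊗[k] A →ₐ[k] A :=
    μ.comp (Algebra.TensorProduct.map μ (AlgHom.id k A)) with hμ3
  set μ4 : ((A ⊗[k] A) ⊗[k] A) ⊗[k] A →ₐ[k] A :=
    μ.comp (Algebra.TensorProduct.map μ3 (AlgHom.id k A)) with hμ4
  have hm : m = m * m := by
    have := congrArg μ4 hhex1
    simp only [map_sum, hμ4, hμ3, hμ, AlgHom.coe_comp, Function.comp_apply,
      Algebra.TensorProduct.map_tmul, AlgHom.coe_id, id_eq,
      Algebra.TensorProduct.lmul'_apply_tmul] at this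
    rw [hmdef, Finset.sum_mul_sum]
    rw [show (∑ i ∈ s, x i * y i * z i : A) = ∑ i ∈ s, x i * y i * 1 * z i by
      apply Finset.sum_congr rfl; intros; ring]
    rw [this]
    apply Finset.sum_congr rfl; intros i _
    apply Finset.sum_congr rfl; intros j _
    ring
  have hRR : R * R = R := by
    rw [hR, Algebra.TensorProduct.tmul_mul_tmul, Algebra.TensorProduct.tmul_mul_tmul, ← hm]
    simp
  have hfinal : R = ((1 : A) ⊗ₜ[k] (1:A)) ⊗ₜ[k] (1:A) := by
    have h1' : R * R = R * 1 := by rw [mul_one, hRR]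
    have := hunit.mul_left_cancel h1'
    rw [this, Algebra.TensorProduct.one_def, Algebra.TensorProduct.one_def]
  exact ⟨hfinal, hepi⟩
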